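/- If a graph G with maximum degree Δ has its edges partitioned into Δ+1 matchings and M is any matroid on V(G) with chromatic number χ(M), then χ(G ∩ M) = χ(M ∩ M_1 ∩ … ∩ M_{Δ+1}), where M_1, …, M_{Δ+1} are the partition matroids induced by the matchings. Consequently, any coloring theorem for intersections of a matroid with partition matroids of chromatic number 2 yields χ(G ∩ M) ≤ Δ + χ(M) + 1 whenever intersections of M with k partition matroids can be colored with 1 + (χ(M)-1) + Σ(χ(M_i)-1) colors. -/
import Mathlib


open scoped Classical

structure FinMatroid (α : Type*) [DecidableEq α] where
  E : Finset α
  Indep : Finset α → Prop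
  indep_empty : Indep ∅
  subset_ground : ∀ ⦃I⦄, Indep I → I ⊆ E
  indep_mono : ∀ ⦃I J⦄, Indep J → I ⊆ J → Indep I
  indep_exchange : ∀ ⦃I J⦄, Indep I → Indep J → I.card < J.card →
      ∃ x ∈ J \ I, Indep (insert x I)

/-- A circuit is an inclusion-minimal dependent set (contained in the ground set). -/
def FinMatroid.Circuit {α : Type*} [DecidableEq α] (M : FinMatroid α) (C : Finset α) : Prop :=
  C ⊆ M.E ∧ ¬ M.Indep C ∧ ∀ D ⊂ C, M.Indep D

/-- `χ(G ∩ M) = χ(M ∩ M_1 ∩ … ∩ M_{Δ+1})` where the `M i` are the partition matroids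
induced by a partition of the edges of `G` (max degree `Δ`) into `Δ+1` matchings;
consequently a coloring of the latter intersection with `1 + (χ(M)-1) + Σ (2-1)`
colors yields `χ(G ∩ M) ≤ Δ + χ(M) + 1`. -/
theorem stmt_10 {V : Type*} [Fintype V] [DecidableEq V] (Δ : ℕ)
    (G : SimpleGraph V) [DecidableRel G.Adj] (hdeg : G.maxDegree ≤ Δ)
    (H : Fin (Δ + 1) → SimpleGraph V)
    (hle : ∀ i, H i ≤ G)
    (hmatch : ∀ i, ∀ v w w' : V, (H i).Adj v w → (H i).Adj v w' → w = w')
    (hdisj : ∀ i j, i ≠ j → Disjoint ((H i).edgeSet) ((H j).edgeSet))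
    (hcover : (⋃ i, (H i).edgeSet) = G.edgeSet)
    (M : FinMatroid V) (hME : M.E = Finset.univ)
    (χM : ℕ)
    (hχM : IsLeast {n : ℕ | ∃ f : V → ℕ, (∀ y, f y < n) ∧
        ∀ c : ℕ, M.Indep (Finset.univ.filter fun y => f y = c)} χM) :
    (∀ n : ℕ,
        IsLeast {m : ℕ | ∃ f : V → ℕ, (∀ y, f y < m) ∧
            ∀ c : ℕ, M.Indep (Finset.univ.filter fun y => f y = c) ∧
              ∀ v ∈ Finset.univ.filter (fun y => f y = c),
                ∀ w ∈ Finset.univ.filter (fun y => f y = c), ¬ G.Adj v w} n ↔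
        IsLeast {m : ℕ | ∃ f : V → ℕ, (∀ y, f y < m) ∧
            ∀ c : ℕ, M.Indep (Finset.univ.filter fun y => f y = c) ∧
              ∀ i, ∀ v ∈ Finset.univ.filter (fun y => f y = c),
                ∀ w ∈ Finset.univ.filter (fun y => f y = c), ¬ (H i).Adj v w} n)
    ∧ ((∃ f : V → ℕ, (∀ y, f y < 1 + (χM - 1) + ∑ _i : Fin (Δ + 1), (2 - 1)) ∧
          ∀ c : ℕ, M.Indep (Finset.univ.filter fun y => f y = c) ∧
            ∀ i, ∀ v ∈ Finset.univ.filter (fun y => f y = c),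
              ∀ w ∈ Finset.univ.filter (fun y => f y = c), ¬ (H i).Adj v w) →
        ∃ f : V → ℕ, (∀ y, f y < Δ + χM + 1) ∧
          ∀ c : ℕ, M.Indep (Finset.univ.filter fun y => f y = c) ∧
            ∀ v ∈ Finset.univ.filter (fun y => f y = c),
              ∀ w ∈ Finset.univ.filter (fun y => f y = c), ¬ G.Adj v w) := by

  have key : ∀ v w : V, G.Adj v w ↔ ∃ i, (H i).Adj v w := by
    intro v w
    constructor
    · intro h
      have hmem : s(v, w) ∈ G.edgeSet := h
      rw [← hcover] at hmem
      simpa using hmem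
    · rintro ⟨i, h⟩
      exact hle i h
  have hsets : {m : ℕ | ∃ f : V → ℕ, (∀ y, f y < m) ∧
      ∀ c : ℕ, M.Indep (Finset.univ.filter fun y => f y = c) ∧
        ∀ v ∈ Finset.univ.filter (fun y => f y = c),
          ∀ w ∈ Finset.univ.filter (fun y => f y = c), ¬ G.Adj v w} =
      {m : ℕ | ∃ f : V → ℕ, (∀ y, f y < m) ∧
      ∀ c : ℕ, M.Indep (Finset.univ.filter fun y => f y = c) ∧
        ∀ i, ∀ v ∈ Finset.univ.filter (fun y => f y = c),
          ∀ w ∈ Finset.univ.filter (fun y => f y = c), ¬ (H i).Adj v w} := by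
    ext m
    constructor
    · rintro ⟨f, hf, hc⟩
      exact ⟨f, hf, fun c => ⟨(hc c).1,
        fun i v hv w hw hadj => (hc c).2 v hv w hw (hle i hadj)⟩⟩
    · rintro ⟨f, hf, hc⟩
      refine ⟨f, hf, fun c => ⟨(hc c).1, fun v hv w hw hadj => ?_⟩⟩
      obtain ⟨i, hi⟩ := (key v w).1 hadj
      exact (hc c).2 i v hv w hw hi
  constructor
  · intro n
    rw [hsets]
  · rintro ⟨f, hf, hc⟩
    refine ⟨f, ?_, fun c => ⟨(hc c).1, fun v hv w hw hadj => ?_⟩⟩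
    · intro y
      rcases Nat.eq_zero_or_pos χM with h0 | hpos
      · obtain ⟨g, hg, -⟩ := h0 ▸ hχM.1
        exact absurd (hg y) (Nat.not_lt_zero _)
      · have := hf y
        simp only [Finset.sum_const, Finset.card_univ, Fintype.card_fin, smul_eq_mul] at this
        omega
    · obtain ⟨i, hi⟩ := (key v w).1 hadj
      exact (hc c).2 i v hv w hw hi
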